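/- Let λ ∈ P₂(ℝ) be absolutely continuous with log-concave density, and let μ, ν ∈ P₂(ℝ) satisfy μ ≤ b·λ and ν ≤ b·λ for some b > 0. Then the displacement interpolation (μ_t)_{t∈[0,1]} between μ and ν (pushforward of μ under T_t = (1−t)id + tT, T the monotone optimal transport map) satisfies μ_t ≤ b·λ for all t ∈ [0,1]. -/

import Mathlib

open MeasureTheory Metric Filter Topology
open scoped ENNReal RealInnerProductSpace Pointwise

noncomputable section

abbrev Euc (d : ℕ) := EuclideanSpace ℝ (Fin d)

/-- The normalized uniform (rotation-invariant) probability measure on the unit sphere. -/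
def uniformSphere (d : ℕ) : Measure (sphere (0 : Euc d) 1) :=
  (((volume : Measure (Euc d)).toSphere) Set.univ)⁻¹ • (volume : Measure (Euc d)).toSphere

/-- Couplings (transport plans) between two measures. -/
def Coupling {X : Type*} [MeasurableSpace X] (μ ν : Measure X) : Set (Measure (X × X)) :=
  {γ | γ.map Prod.fst = μ ∧ γ.map Prod.snd = ν}

/-- Squared 2-Wasserstein distance. -/
def W2sq {X : Type*} [MeasurableSpace X] [Dist X] (μ ν : Measure X) : ℝ≥0∞ :=
  ⨅ (γ : Measure (X × X)) (_ : γ ∈ Coupling μ ν),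
    ∫⁻ p, ENNReal.ofReal (dist p.1 p.2 ^ 2) ∂γ

/-- 2-Wasserstein distance. -/
def W2 {X : Type*} [MeasurableSpace X] [Dist X] (μ ν : Measure X) : ℝ≥0∞ :=
  (W2sq μ ν) ^ (1/2 : ℝ)

/-- Projection (pushforward) of a measure on ℝ^d onto the direction θ. -/
def projMeas (d : ℕ) (μ : Measure (Euc d)) (θ : sphere (0 : Euc d) 1) : Measure ℝ :=
  μ.map (fun x => ⟪x, (θ : Euc d)⟫)

/-- Squared sliced 2-Wasserstein distance: sphere average of squared Wasserstein distances of
projections. -/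
def SW2sq (d : ℕ) (μ ν : Measure (Euc d)) : ℝ≥0∞ :=
  ∫⁻ θ, W2sq (projMeas d μ θ) (projMeas d ν θ) ∂(uniformSphere d)

/-- Sliced 2-Wasserstein distance. -/
def SW2 (d : ℕ) (μ ν : Measure (Euc d)) : ℝ≥0∞ :=
  (SW2sq d μ ν) ^ (1/2 : ℝ)

/-- Finite second moment. -/
def FiniteSecondMoment {X : Type*} [MeasurableSpace X] [Norm X] (μ : Measure X) : Prop :=
  ∫⁻ x, ENNReal.ofReal (‖x‖ ^ 2) ∂μ < ⊤

/-- Narrow (weak) convergence of a sequence of measures. -/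
def NarrowTendsto {X : Type*} [MeasurableSpace X] [TopologicalSpace X]
    (μs : ℕ → Measure X) (μ : Measure X) : Prop :=
  ∀ f : BoundedContinuousFunction X ℝ,
    Tendsto (fun k => ∫ x, f x ∂(μs k)) atTop (𝓝 (∫ x, f x ∂μ))


set_option maxHeartbeats 1000000

section AuxDisp3

open Set


variable {f : ℝ → ℝ}

-- paste of earlier lemmas (will be merged later); use axioms for speed here? No: need soundness. Re-import by copying:
lemma superlevel_ordConnected' (hf0 : ∀ r, 0 ≤ f r)
    (hlc : ∀ x y : ℝ, ∀ t ∈ Set.Icc (0 : ℝ) 1,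
      f x ^ (1 - t) * f y ^ t ≤ f ((1 - t) * x + t * y))
    (s : ℝ) : OrdConnected {x | s < f x} := by
  constructor
  rintro x hx y hy z hz
  rcases lt_or_ge s 0 with hs | hs
  · exact lt_of_lt_of_le hs (hf0 z)
  rcases eq_or_lt_of_le hz.1 with h | hxz
  · rwa [← h]
  rcases eq_or_lt_of_le hz.2 with h | hzy
  · rwa [h]
  have hxy : x < y := hxz.trans hzy
  set c := (z - x) / (y - x) with hc
  have hc0 : 0 < c := div_pos (by linarith) (by linarith)
  have hc1 : c < 1 := (div_lt_one (by linarith)).2 (by linarith)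
  have h1 : c * (y - x) = z - x := div_mul_cancel₀ _ (sub_ne_zero.2 hxy.ne')
  have hzc : (1 - c) * x + c * y = z := by linear_combination h1
  have hm : s < min (f x) (f y) := lt_min hx hy
  have hm0 : 0 < min (f x) (f y) := hs.trans_lt hm
  have h2 : min (f x) (f y) ^ (1 - c) * min (f x) (f y) ^ c
      ≤ f x ^ (1 - c) * f y ^ c := by
    apply mul_le_mul
    · exact Real.rpow_le_rpow hm0.le (min_le_left _ _) (by linarith)
    · exact Real.rpow_le_rpow hm0.le (min_le_right _ _) hc0.le
    · exact Real.rpow_nonneg hm0.le _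
    · exact Real.rpow_nonneg (hf0 x) _
  have h3 : min (f x) (f y) ^ (1 - c) * min (f x) (f y) ^ c = min (f x) (f y) := by
    rw [← Real.rpow_add hm0]; norm_num
  have h4 := hlc x y c ⟨hc0.le, hc1.le⟩
  rw [hzc] at h4
  show s < f z
  calc s < min (f x) (f y) := hm
    _ = _ := h3.symm
    _ ≤ f x ^ (1 - c) * f y ^ c := h2
    _ ≤ f z := h4

lemma measurable_of_logconcave' (hf0 : ∀ r, 0 ≤ f r)
    (hlc : ∀ x y : ℝ, ∀ t ∈ Set.Icc (0 : ℝ) 1,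
      f x ^ (1 - t) * f y ^ t ≤ f ((1 - t) * x + t * y)) : Measurable f :=
  measurable_of_Ioi fun s => (superlevel_ordConnected' hf0 hlc s).measurableSet

lemma ordConnected_Ioo_subset' {S : Set ℝ} (hS : OrdConnected S) (hne : S.Nonempty)
    (hbd : BddBelow S) (hba : BddAbove S) : Ioo (sInf S) (sSup S) ⊆ S := by
  intro z hz
  obtain ⟨a, haS, haz⟩ := (csInf_lt_iff hbd hne).1 hz.1
  obtain ⟨b, hbS, hzb⟩ := (lt_csSup_iff hba hne).1 hz.2
  exact hS.out haS hbS ⟨haz.le, hzb.le⟩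

lemma lintegral_Ioi_comp_mul' {g : ℝ → ℝ≥0∞} (hg : Measurable g) {c : ℝ} (hc : 0 < c) :
    ∫⁻ s in Ioi (0 : ℝ), g (c * s) = ENNReal.ofReal c⁻¹ * ∫⁻ s in Ioi (0 : ℝ), g s := by
  have hmap : (volume.restrict (Ioi (0 : ℝ))).map (fun x => c * x)
      = ENNReal.ofReal c⁻¹ • volume.restrict (Ioi (0 : ℝ)) := by
    ext s hs
    rw [Measure.map_apply (measurable_const_mul c) hs,
      Measure.restrict_apply (measurable_const_mul c hs), Measure.smul_apply,
      Measure.restrict_apply hs, smul_eq_mul]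
    have hset : (fun x => c * x) ⁻¹' s ∩ Ioi 0 = (fun x => c * x) ⁻¹' (s ∩ Ioi 0) := by
      ext x
      simp only [mem_inter_iff, mem_preimage, mem_Ioi]
      constructor
      · rintro ⟨h1, h2⟩; exact ⟨h1, mul_pos hc h2⟩
      · rintro ⟨h1, h2⟩
        refine ⟨h1, ?_⟩
        by_contra hx
        push_neg at hx
        nlinarith
    rw [hset, Real.volume_preimage_mul_left hc.ne' _, abs_of_pos (inv_pos.2 hc)]
  calc ∫⁻ s in Ioi (0:ℝ), g (c * s)
      = ∫⁻ y, g y ∂((volume.restrict (Ioi (0:ℝ))).map (fun x => c * x)) :=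
        (lintegral_map hg (measurable_const_mul c)).symm
    _ = _ := by rw [hmap, lintegral_smul_measure, smul_eq_mul]

/-- Bounded core: 1-D Prékopa–Leindler-type inequality for intervals. -/
lemma core_bdd (f : ℝ → ℝ) (hf0 : ∀ r, 0 ≤ f r)
    (hlc : ∀ x y : ℝ, ∀ t ∈ Set.Icc (0 : ℝ) 1,
      f x ^ (1 - t) * f y ^ t ≤ f ((1 - t) * x + t * y))
    (M₀ : ℝ) (hbd : ∀ x, f x ≤ M₀)
    {t : ℝ} (ht0 : 0 < t) (ht1 : t < 1) {p q P Q : ℝ} (hpq : p ≤ q) (hPQ : P ≤ Q) :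
    min (∫⁻ x in Icc p q, ENNReal.ofReal (f x)) (∫⁻ x in Icc P Q, ENNReal.ofReal (f x))
      ≤ ∫⁻ x in Icc ((1 - t) * p + t * P) ((1 - t) * q + t * Q), ENNReal.ofReal (f x) := by
  have fmeas : Measurable f := measurable_of_logconcave' hf0 hlc
  have hlev : ∀ s : ℝ, OrdConnected {x | s < f x} := superlevel_ordConnected' hf0 hlc
  have ht0' : (0:ℝ) ≤ 1 - t := by linarith
  set α := (1 - t) * p + t * P with hα
  set β := (1 - t) * q + t * Q with hβ
  have hαβ : α ≤ β := by nlinarith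
  set A := ∫⁻ x in Icc p q, ENNReal.ofReal (f x) with hA
  set B := ∫⁻ x in Icc P Q, ENNReal.ofReal (f x) with hB
  set C := ∫⁻ x in Icc α β, ENNReal.ofReal (f x) with hC
  have hbddA : BddAbove (f '' Icc p q) := ⟨M₀, by rintro y ⟨x, -, rfl⟩; exact hbd x⟩
  have hbddB : BddAbove (f '' Icc P Q) := ⟨M₀, by rintro y ⟨x, -, rfl⟩; exact hbd x⟩
  set M1 := sSup (f '' Icc p q) with hM1def
  set M2 := sSup (f '' Icc P Q) with hM2def
  have hfleM1 : ∀ x ∈ Icc p q, f x ≤ M1 := fun x hx => le_csSup hbddA ⟨x, hx, rfl⟩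
  have hfleM2 : ∀ x ∈ Icc P Q, f x ≤ M2 := fun x hx => le_csSup hbddB ⟨x, hx, rfl⟩
  have hM1nn : 0 ≤ M1 := (hf0 p).trans (hfleM1 p ⟨le_refl p, hpq⟩)
  have hM2nn : 0 ≤ M2 := (hf0 P).trans (hfleM2 P ⟨le_refl P, hPQ⟩)
  -- degenerate cases
  have hzero : ∀ u v : ℝ, (∀ x ∈ Icc u v, f x ≤ 0) →
      ∫⁻ x in Icc u v, ENNReal.ofReal (f x) = 0 := by
    intro u v h
    have : ∀ x ∈ Icc u v, ENNReal.ofReal (f x) = (0:ℝ≥0∞) := fun x hx => by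
      simp [ENNReal.ofReal_eq_zero.2 (h x hx)]
    rw [setLIntegral_congr_fun measurableSet_Icc this, lintegral_zero]
  rcases eq_or_lt_of_le hM1nn with hM1z | hM1pos
  · have : A = 0 := hzero p q (fun x hx => by rw [← hM1z] at hfleM1; exact hfleM1 x hx)
    calc min A B ≤ A := min_le_left _ _
      _ = 0 := this
      _ ≤ C := zero_le
  rcases eq_or_lt_of_le hM2nn with hM2z | hM2pos
  · have : B = 0 := hzero P Q (fun x hx => by rw [← hM2z] at hfleM2; exact hfleM2 x hx)
    calc min A B ≤ B := min_le_right _ _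
      _ = 0 := this
      _ ≤ C := zero_le
  set M := M1 ^ (1 - t) * M2 ^ t with hMdef
  have hMpos : 0 < M := mul_pos (Real.rpow_pos_of_pos hM1pos _) (Real.rpow_pos_of_pos hM2pos _)
  -- level measure functions
  set G1 : ℝ → ℝ≥0∞ := fun s => volume ({x | s < f x} ∩ Icc p q) with hG1
  set G2 : ℝ → ℝ≥0∞ := fun s => volume ({x | s < f x} ∩ Icc P Q) with hG2
  set GW : ℝ → ℝ≥0∞ := fun s => volume ({x | s < f x} ∩ Icc α β) with hGW
  have hanti : ∀ (u v : ℝ), Antitone (fun s => volume ({x | s < f x} ∩ Icc u v)) := by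
    intro u v s s' hss'
    exact measure_mono (inter_subset_inter_left _ (fun x (hx : s' < f x) => lt_of_le_of_lt hss' hx))
  have hG1meas : Measurable G1 := (hanti p q).measurable
  have hG2meas : Measurable G2 := (hanti P Q).measurable
  have hGWmeas : Measurable GW := (hanti α β).measurable
  -- layer cake
  have layer : ∀ u v : ℝ,
      ∫⁻ x in Icc u v, ENNReal.ofReal (f x) = ∫⁻ s in Ioi (0:ℝ),
        volume ({x | s < f x} ∩ Icc u v) := by
    intro u v
    rw [lintegral_eq_lintegral_meas_lt (volume.restrict (Icc u v)) (ae_of_all _ hf0)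
      fmeas.aemeasurable]
    refine lintegral_congr fun s => ?_
    rw [Measure.restrict_apply (measurableSet_lt measurable_const fmeas)]
  -- key pointwise inequality
  have key : ∀ s : ℝ, s ∈ Ioi (0:ℝ) →
      ENNReal.ofReal (1 - t) * G1 (M1 * s) + ENNReal.ofReal t * G2 (M2 * s) ≤ GW (M * s) := by
    intro s hs
    rw [mem_Ioi] at hs
    rcases le_or_gt 1 s with hs1 | hs1
    · have hem1 : {x | M1 * s < f x} ∩ Icc p q = ∅ := by
        ext x
        simp only [mem_inter_iff, mem_setOf_eq, mem_empty_iff_false, iff_false, not_and]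
        intro hfx hx
        have := hfleM1 x hx
        nlinarith
      have hem2 : {x | M2 * s < f x} ∩ Icc P Q = ∅ := by
        ext x
        simp only [mem_inter_iff, mem_setOf_eq, mem_empty_iff_false, iff_false, not_and]
        intro hfx hx
        have := hfleM2 x hx
        nlinarith
      have h1 : G1 (M1 * s) = 0 := by rw [hG1]; simp only [hem1, measure_empty]
      have h2 : G2 (M2 * s) = 0 := by rw [hG2]; simp only [hem2, measure_empty]
      rw [h1, h2, mul_zero, mul_zero, add_zero]
      exact zero_le
    · -- main case
      set U := {x | M1 * s < f x} ∩ Icc p q with hU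
      set V := {x | M2 * s < f x} ∩ Icc P Q with hV
      have hUord : OrdConnected U := (hlev (M1 * s)).inter ordConnected_Icc
      have hVord : OrdConnected V := (hlev (M2 * s)).inter ordConnected_Icc
      have hUne : U.Nonempty := by
        have hlt : M1 * s < M1 := by nlinarith
        obtain ⟨y, hy, hys⟩ := exists_lt_of_lt_csSup ((nonempty_Icc.2 hpq).image f) hlt
        obtain ⟨x, hx, rfl⟩ := hy
        exact ⟨x, hys, hx⟩
      have hVne : V.Nonempty := by
        have hlt : M2 * s < M2 := by nlinarith
        obtain ⟨y, hy, hys⟩ := exists_lt_of_lt_csSup ((nonempty_Icc.2 hPQ).image f) hlt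
        obtain ⟨x, hx, rfl⟩ := hy
        exact ⟨x, hys, hx⟩
      have hUbdb : BddBelow U := bddBelow_Icc.mono inter_subset_right
      have hUbda : BddAbove U := bddAbove_Icc.mono inter_subset_right
      have hVbdb : BddBelow V := bddBelow_Icc.mono inter_subset_right
      have hVbda : BddAbove V := bddAbove_Icc.mono inter_subset_right
      set u1 := sInf U with hu1
      set u2 := sSup U with hu2
      set v1 := sInf V with hv1
      set v2 := sSup V with hv2
      obtain ⟨x0, hx0⟩ := hUne
      obtain ⟨y0, hy0⟩ := hVne
      have hu12 : u1 ≤ u2 := (csInf_le hUbdb hx0).trans (le_csSup hUbda hx0)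
      have hv12 : v1 ≤ v2 := (csInf_le hVbdb hy0).trans (le_csSup hVbda hy0)
      have hu1p : p ≤ u1 := le_csInf ⟨x0, hx0⟩ (fun x hx => hx.2.1)
      have hu2q : u2 ≤ q := csSup_le ⟨x0, hx0⟩ (fun x hx => hx.2.2)
      have hv1P : P ≤ v1 := le_csInf ⟨y0, hy0⟩ (fun x hx => hx.2.1)
      have hv2Q : v2 ≤ Q := csSup_le ⟨y0, hy0⟩ (fun x hx => hx.2.2)
      have hG1le : G1 (M1 * s) ≤ ENNReal.ofReal (u2 - u1) := by
        rw [← Real.volume_Icc]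
        exact measure_mono (fun x hx => ⟨csInf_le hUbdb hx, le_csSup hUbda hx⟩)
      have hG2le : G2 (M2 * s) ≤ ENNReal.ofReal (v2 - v1) := by
        rw [← Real.volume_Icc]
        exact measure_mono (fun x hx => ⟨csInf_le hVbdb hx, le_csSup hVbda hx⟩)
      have hsub : Ioo ((1-t)*u1 + t*v1) ((1-t)*u2 + t*v2) ⊆ {x | M * s < f x} ∩ Icc α β := by
        intro z hz
        have hζ : (1-t)*u1 + t*v1 < (1-t)*u2 + t*v2 := hz.1.trans hz.2
        set σ := (z - ((1-t)*u1 + t*v1)) / (((1-t)*u2 + t*v2) - ((1-t)*u1 + t*v1)) with hσ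
        have hσ0 : 0 < σ := div_pos (by linarith [hz.1]) (by linarith)
        have hσ1 : σ < 1 := (div_lt_one (by linarith)).2 (by linarith [hz.2])
        set u := u1 + σ * (u2 - u1) with hudef
        set v := v1 + σ * (v2 - v1) with hvdef
        have hzuv : (1 - t) * u + t * v = z := by
          have h1 : σ * ((((1:ℝ)-t)*u2 + t*v2) - ((1-t)*u1 + t*v1))
              = z - ((1-t)*u1 + t*v1) := div_mul_cancel₀ _ (sub_ne_zero.2 hζ.ne')
          rw [hudef, hvdef]
          linear_combination h1
        have interval_mem : ∀ (S : Set ℝ), OrdConnected S → S.Nonempty → BddBelow S →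
            BddAbove S → ∀ w : ℝ, w = sInf S + σ * (sSup S - sInf S) → w ∈ S := by
          intro S hSo hSne hSb hSa w hw
          rcases eq_or_lt_of_le ((le_csSup hSa hSne.choose_spec).trans'
            (csInf_le hSb hSne.choose_spec) : sInf S ≤ sSup S) with he | hlt
          · have hw' : w = sInf S := by rw [hw, ← he]; ring
            obtain ⟨x', hx'⟩ := hSne
            have : sInf S = x' := le_antisymm (csInf_le hSb hx')
              (by rw [he]; exact le_csSup hSa hx')
            rw [hw', this]; exact hx'
          · apply ordConnected_Ioo_subset' hSo hSne hSb hSa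
            constructor
            · rw [hw]; nlinarith
            · rw [hw]; nlinarith
        have hu : u ∈ U := interval_mem U hUord ⟨x0, hx0⟩ hUbdb hUbda u hudef
        have hv : v ∈ V := interval_mem V hVord ⟨y0, hy0⟩ hVbdb hVbda v hvdef
        constructor
        · show M * s < f z
          have hfu : M1 * s < f u := hu.1
          have hfv : M2 * s < f v := hv.1
          have hstep : (M1*s) ^ (1-t) * (M2*s) ^ t < f u ^ (1-t) * f v ^ t := by
            apply mul_lt_mul'' (Real.rpow_lt_rpow (by positivity) hfu (by linarith))
              (Real.rpow_lt_rpow (by positivity) hfv ht0) (by positivity) (by positivity)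
          have heq : (M1*s) ^ (1-t) * (M2*s) ^ t = M * s := by
            rw [Real.mul_rpow hM1pos.le hs.le, Real.mul_rpow hM2pos.le hs.le]
            have hss : s ^ (1-t) * s ^ t = s := by
              rw [← Real.rpow_add hs]; norm_num
            rw [hMdef]
            linear_combination (M1 ^ (1 - t) * M2 ^ t) * hss
          calc M * s = (M1*s) ^ (1-t) * (M2*s) ^ t := heq.symm
            _ < f u ^ (1-t) * f v ^ t := hstep
            _ ≤ f ((1-t)*u + t*v) := hlc u v t ⟨ht0.le, ht1.le⟩
            _ = f z := by rw [hzuv]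
        · constructor
          · rw [hα, ← hzuv]
            have e1 : (1-t)*p ≤ (1-t)*u := by nlinarith [hu.2.1]
            have e2 : t*P ≤ t*v := by nlinarith [hv.2.1]
            linarith
          · rw [hβ, ← hzuv]
            have e1 : (1-t)*u ≤ (1-t)*q := by nlinarith [hu.2.2]
            have e2 : t*v ≤ t*Q := by nlinarith [hv.2.2]
            linarith
      have hGWge : ENNReal.ofReal ((1-t)*(u2-u1) + t*(v2-v1)) ≤ GW (M * s) := by
        have : ((1:ℝ)-t)*(u2-u1) + t*(v2-v1)
            = ((1-t)*u2 + t*v2) - ((1-t)*u1 + t*v1) := by ring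
        rw [this, ← Real.volume_Ioo]
        exact measure_mono hsub
      calc ENNReal.ofReal (1 - t) * G1 (M1 * s) + ENNReal.ofReal t * G2 (M2 * s)
          ≤ ENNReal.ofReal (1 - t) * ENNReal.ofReal (u2 - u1)
            + ENNReal.ofReal t * ENNReal.ofReal (v2 - v1) :=
            add_le_add (mul_le_mul_right hG1le _) (mul_le_mul_right hG2le _)
        _ = ENNReal.ofReal ((1-t)*(u2-u1) + t*(v2-v1)) := by
            rw [← ENNReal.ofReal_mul ht0', ← ENNReal.ofReal_mul ht0.le,
              ← ENNReal.ofReal_add (by nlinarith) (by nlinarith)]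
        _ ≤ GW (M * s) := hGWge
  -- integrate
  have hmeas1 : Measurable (fun s => G1 (M1 * s)) := hG1meas.comp (measurable_const_mul M1)
  have hmeas2 : Measurable (fun s => G2 (M2 * s)) := hG2meas.comp (measurable_const_mul M2)
  have hsubA : ∫⁻ s in Ioi (0:ℝ), G1 (M1 * s) = ENNReal.ofReal M1⁻¹ * A := by
    rw [lintegral_Ioi_comp_mul' hG1meas hM1pos, hA, layer p q]
  have hsubB : ∫⁻ s in Ioi (0:ℝ), G2 (M2 * s) = ENNReal.ofReal M2⁻¹ * B := by
    rw [lintegral_Ioi_comp_mul' hG2meas hM2pos, hB, layer P Q]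
  have hsubC : ∫⁻ s in Ioi (0:ℝ), GW (M * s) = ENNReal.ofReal M⁻¹ * C := by
    rw [lintegral_Ioi_comp_mul' hGWmeas hMpos, hC, layer α β]
  have hint : ENNReal.ofReal (1-t) * (ENNReal.ofReal M1⁻¹ * A)
      + ENNReal.ofReal t * (ENNReal.ofReal M2⁻¹ * B) ≤ ENNReal.ofReal M⁻¹ * C := by
    rw [← hsubA, ← hsubB, ← hsubC, ← lintegral_const_mul _ hmeas1,
      ← lintegral_const_mul _ hmeas2, ← lintegral_add_left (hmeas1.const_mul _)]
    apply lintegral_mono_ae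
    exact (ae_restrict_iff' measurableSet_Ioi).2 (ae_of_all _ key)
  have hreal : (1:ℝ) ≤ (1-t) * (M * M1⁻¹) + t * (M * M2⁻¹) := by
    have hp1 : (0:ℝ) < M * M1⁻¹ := by positivity
    have hp2 : (0:ℝ) < M * M2⁻¹ := by positivity
    have hgm := Real.geom_mean_le_arith_mean2_weighted ht0' ht0.le hp1.le hp2.le (by ring)
    have hrw : (M * M1⁻¹) ^ (1-t) * (M * M2⁻¹) ^ t = 1 := by
      rw [Real.mul_rpow hMpos.le (by positivity), Real.mul_rpow hMpos.le (by positivity),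
        Real.inv_rpow hM1pos.le, Real.inv_rpow hM2pos.le]
      have hMM : M ^ (1-t) * M ^ t = M := by rw [← Real.rpow_add hMpos]; norm_num
      have ha : (0:ℝ) < M1 ^ (1-t) := Real.rpow_pos_of_pos hM1pos _
      have hb : (0:ℝ) < M2 ^ t := Real.rpow_pos_of_pos hM2pos _
      field_simp
      linear_combination hMM - hMdef
    calc (1:ℝ) = (M * M1⁻¹) ^ (1-t) * (M * M2⁻¹) ^ t := hrw.symm
      _ ≤ _ := hgm
  have e1 : ENNReal.ofReal ((1-t)*(M*M1⁻¹)) = ENNReal.ofReal M * ENNReal.ofReal (1-t)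
      * ENNReal.ofReal M1⁻¹ := by
    rw [← ENNReal.ofReal_mul hMpos.le, ← ENNReal.ofReal_mul (by positivity)]
    congr 1; ring
  have e2 : ENNReal.ofReal (t*(M*M2⁻¹)) = ENNReal.ofReal M * ENNReal.ofReal t
      * ENNReal.ofReal M2⁻¹ := by
    rw [← ENNReal.ofReal_mul hMpos.le, ← ENNReal.ofReal_mul (by positivity)]
    congr 1; ring
  calc min A B = ENNReal.ofReal 1 * min A B := by rw [ENNReal.ofReal_one, one_mul]
    _ ≤ ENNReal.ofReal ((1-t)*(M*M1⁻¹) + t*(M*M2⁻¹)) * min A B :=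
        mul_le_mul_left (ENNReal.ofReal_le_ofReal hreal) _
    _ = ENNReal.ofReal ((1-t)*(M*M1⁻¹)) * min A B
        + ENNReal.ofReal (t*(M*M2⁻¹)) * min A B := by
        rw [ENNReal.ofReal_add (by positivity) (by positivity), add_mul]
    _ ≤ ENNReal.ofReal ((1-t)*(M*M1⁻¹)) * A + ENNReal.ofReal (t*(M*M2⁻¹)) * B :=
        add_le_add (mul_le_mul_right (min_le_left _ _) _)
          (mul_le_mul_right (min_le_right _ _) _)
    _ = ENNReal.ofReal M * (ENNReal.ofReal (1-t) * (ENNReal.ofReal M1⁻¹ * A)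
        + ENNReal.ofReal t * (ENNReal.ofReal M2⁻¹ * B)) := by
        rw [e1, e2]; ring
    _ ≤ ENNReal.ofReal M * (ENNReal.ofReal M⁻¹ * C) := mul_le_mul_right hint _
    _ = (ENNReal.ofReal M * ENNReal.ofReal M⁻¹) * C := by ring
    _ = C := by
        rw [← ENNReal.ofReal_mul hMpos.le, mul_inv_cancel₀ hMpos.ne', ENNReal.ofReal_one,
          one_mul]

end AuxDisp3

section AuxDisp2

open Set


variable {f : ℝ → ℝ}

lemma logconc_min
    (hlc : ∀ x y : ℝ, ∀ t ∈ Set.Icc (0 : ℝ) 1,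
      f x ^ (1 - t) * f y ^ t ≤ f ((1 - t) * x + t * y))
    (hf0 : ∀ r, 0 ≤ f r) {M : ℝ} (hM : 0 < M) :
    ∀ x y : ℝ, ∀ t ∈ Set.Icc (0 : ℝ) 1,
      min (f x) M ^ (1 - t) * min (f y) M ^ t
        ≤ min (f ((1 - t) * x + t * y)) M := by
  intro x y t ht
  have hxnn : 0 ≤ min (f x) M := le_min (hf0 x) hM.le
  have hynn : 0 ≤ min (f y) M := le_min (hf0 y) hM.le
  have ht0 : 0 ≤ 1 - t := by have := ht.2; linarith
  apply le_min
  · calc min (f x) M ^ (1 - t) * min (f y) M ^ t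
        ≤ f x ^ (1 - t) * f y ^ t := by
          apply mul_le_mul (Real.rpow_le_rpow hxnn (min_le_left _ _) ht0)
            (Real.rpow_le_rpow hynn (min_le_left _ _) ht.1)
            (Real.rpow_nonneg hynn _) (Real.rpow_nonneg (hf0 x) _)
      _ ≤ _ := hlc x y t ht
  · calc min (f x) M ^ (1 - t) * min (f y) M ^ t
        ≤ M ^ (1 - t) * M ^ t := by
          apply mul_le_mul (Real.rpow_le_rpow hxnn (min_le_right _ _) ht0)
            (Real.rpow_le_rpow hynn (min_le_right _ _) ht.1)
            (Real.rpow_nonneg hynn _) (Real.rpow_nonneg hM.le _)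
      _ = M := by rw [← Real.rpow_add hM]; norm_num

end AuxDisp2

section DispAux

set_option maxHeartbeats 1000000

open Set

variable {f : ℝ → ℝ}


lemma min_iSup_le {a b : ℕ → ℝ≥0∞} {C : ℝ≥0∞} (ha : Monotone a) (hb : Monotone b)
    (h : ∀ n, min (a n) (b n) ≤ C) : min (⨆ n, a n) (⨆ n, b n) ≤ C := by
  by_contra hlt
  push_neg at hlt
  rw [lt_min_iff] at hlt
  obtain ⟨n1, hn1⟩ := lt_iSup_iff.mp hlt.1
  obtain ⟨n2, hn2⟩ := lt_iSup_iff.mp hlt.2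
  have h1 : C < a (max n1 n2) := hn1.trans_le (ha (le_max_left _ _))
  have h2 : C < b (max n1 n2) := hn2.trans_le (hb (le_max_right _ _))
  exact absurd (h (max n1 n2)) (not_le.2 (lt_min h1 h2))

/-- The full interval Prékopa–Leindler-type core inequality (unbounded version). -/
lemma disp_core (f : ℝ → ℝ) (hf0 : ∀ r, 0 ≤ f r)
    (hlc : ∀ x y : ℝ, ∀ t ∈ Set.Icc (0 : ℝ) 1,
      f x ^ (1 - t) * f y ^ t ≤ f ((1 - t) * x + t * y))
    {t : ℝ} (ht : t ∈ Set.Icc (0:ℝ) 1) {p q P Q : ℝ} (hpq : p ≤ q) (hPQ : P ≤ Q) :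
    min (∫⁻ x in Icc p q, ENNReal.ofReal (f x)) (∫⁻ x in Icc P Q, ENNReal.ofReal (f x))
      ≤ ∫⁻ x in Icc ((1 - t) * p + t * P) ((1 - t) * q + t * Q), ENNReal.ofReal (f x) := by
  obtain ⟨ht0, ht1⟩ := ht
  have fmeas : Measurable f := measurable_of_logconcave' hf0 hlc
  rcases eq_or_lt_of_le ht0 with h0 | ht0
  · have e1 : (1 - t) * p + t * P = p := by rw [← h0]; ring
    have e2 : (1 - t) * q + t * Q = q := by rw [← h0]; ring
    rw [e1, e2]
    exact min_le_left _ _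
  rcases eq_or_lt_of_le ht1 with h1 | ht1
  · have e1 : (1 - t) * p + t * P = P := by rw [h1]; ring
    have e2 : (1 - t) * q + t * Q = Q := by rw [h1]; ring
    rw [e1, e2]
    exact min_le_right _ _
  have hfn0 : ∀ n : ℕ, ∀ x, 0 ≤ min (f x) ((n:ℝ)+1) := fun n x => le_min (hf0 x) (by positivity)
  have hfnlc : ∀ n : ℕ, ∀ x y : ℝ, ∀ s ∈ Set.Icc (0:ℝ) 1,
      min (f x) ((n:ℝ)+1) ^ (1-s) * min (f y) ((n:ℝ)+1) ^ s
        ≤ min (f ((1-s)*x+s*y)) ((n:ℝ)+1) :=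
    fun n => logconc_min hlc hf0 (by positivity)
  have hcb := fun n : ℕ => core_bdd (fun x => min (f x) ((n:ℝ)+1)) (hfn0 n) (hfnlc n)
    ((n:ℝ)+1) (fun x => min_le_right _ _) ht0 ht1 hpq hPQ
  have hmonoseq : Monotone fun (n:ℕ) (x:ℝ) => ENNReal.ofReal (min (f x) ((n:ℝ)+1)) := by
    intro n m hnm x
    have hc : (n:ℝ) + 1 ≤ (m:ℝ) + 1 := by
      have := (Nat.cast_le (α := ℝ)).2 hnm
      linarith
    exact ENNReal.ofReal_le_ofReal (le_min (min_le_left _ _) ((min_le_right _ _).trans hc))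
  have hmono : ∀ u v : ℝ,
      Monotone (fun n : ℕ => ∫⁻ x in Icc u v, ENNReal.ofReal (min (f x) ((n:ℝ)+1))) := by
    intro u v n m hnm
    exact lintegral_mono (hmonoseq hnm)
  have hsup : ∀ u v : ℝ,
      (⨆ n : ℕ, ∫⁻ x in Icc u v, ENNReal.ofReal (min (f x) ((n:ℝ)+1)))
        = ∫⁻ x in Icc u v, ENNReal.ofReal (f x) := by
    intro u v
    have hmeasn : ∀ n : ℕ, Measurable fun x => ENNReal.ofReal (min (f x) ((n:ℝ)+1)) :=
      fun n => (fmeas.min measurable_const).ennreal_ofReal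
    rw [← lintegral_iSup hmeasn hmonoseq]
    refine lintegral_congr fun x => ?_
    apply le_antisymm (iSup_le fun n => ENNReal.ofReal_le_ofReal (min_le_left _ _))
    obtain ⟨n, hn⟩ := exists_nat_ge (f x)
    refine le_iSup_of_le n (le_of_eq ?_)
    rw [min_eq_left (by linarith)]
  rw [← hsup p q, ← hsup P Q]
  refine min_iSup_le (hmono p q) (hmono P Q) (fun n => ?_)
  exact (hcb n).trans (lintegral_mono fun x => ENNReal.ofReal_le_ofReal (min_le_left _ _))

end DispAux


section MainDisp

set_option maxHeartbeats 1000000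

open Set

/-- if λ has a log-concave density and μ, ν ≤ b·λ on ℝ, then the displacement
interpolation along a monotone transport map T from μ to ν stays ≤ b·λ. -/
theorem displacement_interpolation_bounded (lam μ ν : Measure ℝ)
    [IsProbabilityMeasure lam] [IsProbabilityMeasure μ] [IsProbabilityMeasure ν]
    (hlam2 : FiniteSecondMoment lam) (hμ2 : FiniteSecondMoment μ) (hν2 : FiniteSecondMoment ν)
    (f : ℝ → ℝ) (hf0 : ∀ r, 0 ≤ f r)
    (hlam : lam = volume.withDensity (fun r => ENNReal.ofReal (f r)))
    (hlogconc : ∀ x y : ℝ, ∀ t ∈ Set.Icc (0 : ℝ) 1,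
      f x ^ (1 - t) * f y ^ t ≤ f ((1 - t) * x + t * y))
    (b : ℝ) (hb : 0 < b)
    (hμb : μ ≤ ENNReal.ofReal b • lam) (hνb : ν ≤ ENNReal.ofReal b • lam)
    (T : ℝ → ℝ) (hT : Monotone T) (hTpush : μ.map T = ν) :
    ∀ t ∈ Set.Icc (0 : ℝ) 1,
      μ.map (fun r => (1 - t) * r + t * T r) ≤ ENNReal.ofReal b • lam := by
  intro t ht
  obtain ⟨ht0, ht1e⟩ := ht
  rcases eq_or_lt_of_le ht1e with heq | ht1
  · subst heq
    have hTfun : (fun r => (1 - (1:ℝ)) * r + 1 * T r) = T := by funext r; ring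
    rw [hTfun, hTpush]
    exact hνb
  have hc1 : 0 < 1 - t := by linarith
  have fmeas : Measurable f := measurable_of_logconcave' hf0 hlogconc
  have hTmeas : Measurable T := hT.measurable
  set Tt : ℝ → ℝ := fun r => (1 - t) * r + t * T r with hTtdef
  have hTtmono : Monotone Tt := by
    intro r r' h
    have h2 := hT h
    simp only [hTtdef]
    nlinarith
  have hTtstrict : StrictMono Tt := by
    intro r r' h
    have h2 := hT h.le
    simp only [hTtdef]
    nlinarith
  have hTtmeas : Measurable Tt := hTtmono.measurable
  have hlamvol : lam ≪ (volume : Measure ℝ) := by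
    rw [hlam]; exact withDensity_absolutelyContinuous _ _
  have hμle : ∀ s : Set ℝ, μ s ≤ ENNReal.ofReal b * lam s := by
    intro s
    have := Measure.le_iff'.1 hμb s
    simpa [Measure.smul_apply, smul_eq_mul] using this
  have hνle : ∀ s : Set ℝ, ν s ≤ ENNReal.ofReal b * lam s := by
    intro s
    have := Measure.le_iff'.1 hνb s
    simpa [Measure.smul_apply, smul_eq_mul] using this
  have hμnull : ∀ s : Set ℝ, volume s = 0 → μ s = 0 := by
    intro s hs
    refine le_antisymm ?_ (zero_le)
    calc μ s ≤ ENNReal.ofReal b * lam s := hμle s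
      _ = 0 := by rw [hlamvol hs, mul_zero]
  -- Step 1: interval comparison
  have step1 : ∀ a c : ℝ, μ (Tt ⁻¹' Icc a c) ≤ ENNReal.ofReal b * lam (Icc a c) := by
    intro a c
    rcases (Tt ⁻¹' Icc a c).eq_empty_or_nonempty with he | ⟨r0, hr0⟩
    · rw [he]; simp
    set J := Tt ⁻¹' Icc a c with hJdef
    have hJord : OrdConnected J := by
      constructor
      intro r hr r' hr' z hz
      exact ⟨le_trans hr.1 (hTtmono hz.1), le_trans (hTtmono hz.2) hr'.2⟩
    have pair : ∀ p' q', p' ∈ J → q' ∈ J → p' ≤ q' →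
        μ (Icc p' q') ≤ ENNReal.ofReal b * lam (Icc a c) := by
      intro p' q' hp' hq' hpq'
      have hTpq : T p' ≤ T q' := hT hpq'
      have h2 : μ (Icc p' q') ≤ ENNReal.ofReal b * lam (Icc (T p') (T q')) := by
        calc μ (Icc p' q') ≤ μ (T ⁻¹' Icc (T p') (T q')) :=
              measure_mono (fun x hx => ⟨hT hx.1, hT hx.2⟩)
          _ = ν (Icc (T p') (T q')) := by
              rw [← hTpush, Measure.map_apply hTmeas measurableSet_Icc]
          _ ≤ _ := hνle _
      have hlamIcc : ∀ u v : ℝ, lam (Icc u v) = ∫⁻ x in Icc u v, ENNReal.ofReal (f x) := by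
        intro u v
        rw [hlam, withDensity_apply _ measurableSet_Icc]
      have hcore := disp_core f hf0 hlogconc (t := t) ⟨ht0, ht1.le⟩ hpq' hTpq
      have htarget : Icc ((1-t)*p' + t*T p') ((1-t)*q' + t*T q') ⊆ Icc a c :=
        Icc_subset_Icc hp'.1 hq'.2
      calc μ (Icc p' q')
          ≤ ENNReal.ofReal b * min (lam (Icc p' q')) (lam (Icc (T p') (T q'))) := by
            rcases le_total (lam (Icc p' q')) (lam (Icc (T p') (T q'))) with h | h
            · rw [min_eq_left h]; exact hμle _
            · rw [min_eq_right h]; exact h2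
        _ ≤ ENNReal.ofReal b * lam (Icc ((1-t)*p' + t*T p') ((1-t)*q' + t*T q')) := by
            apply mul_le_mul_right
            rw [hlamIcc, hlamIcc, hlamIcc]
            exact hcore
        _ ≤ ENNReal.ofReal b * lam (Icc a c) := mul_le_mul_right (measure_mono htarget) _
    -- boundedness of J
    have hJsub : J ⊆ Icc (min r0 ((a - t * T r0)/(1-t))) (max r0 ((c - t * T r0)/(1-t))) := by
      intro r hr
      constructor
      · rcases le_total r0 r with h | h
        · exact le_trans (min_le_left _ _) h
        · have hTr : T r ≤ T r0 := hT h
          have ha : a ≤ (1-t)*r + t*T r := hr.1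
          have h3 : t*T r ≤ t*T r0 := mul_le_mul_of_nonneg_left hTr ht0
          have : (a - t*T r0)/(1-t) ≤ r := by
            rw [div_le_iff₀ hc1]
            linarith
          exact le_trans (min_le_right _ _) this
      · rcases le_total r r0 with h | h
        · exact le_trans h (le_max_left _ _)
        · have hTr : T r0 ≤ T r := hT h
          have hcc : (1-t)*r + t*T r ≤ c := hr.2
          have h3 : t*T r0 ≤ t*T r := mul_le_mul_of_nonneg_left hTr ht0
          have : r ≤ (c - t*T r0)/(1-t) := by
            rw [le_div_iff₀ hc1]
            linarith
          exact le_trans this (le_max_right _ _)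
    have hJbdb : BddBelow J := ⟨_, fun r hr => (hJsub hr).1⟩
    have hJbda : BddAbove J := ⟨_, fun r hr => (hJsub hr).2⟩
    set p := sInf J with hpdef
    set q := sSup J with hqdef
    have hJpq : J ⊆ Icc p q := fun r hr => ⟨csInf_le hJbdb hr, le_csSup hJbda hr⟩
    have hatom : ∀ x : ℝ, μ {x} = 0 := fun x => hμnull _ Real.volume_singleton
    rcases le_or_gt q p with hqp | hpq
    · have : J ⊆ {p} := by
        intro r hr
        have h1 := (hJpq hr).1
        have h2 := (hJpq hr).2
        have : r = p := le_antisymm (h2.trans hqp) h1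
        simp [this]
      calc μ J ≤ μ {p} := measure_mono this
        _ = 0 := hatom p
        _ ≤ _ := zero_le
    · have hIooJ : Ioo p q ⊆ J := by
        intro z hz
        obtain ⟨r1, hr1J, hr1z⟩ := (csInf_lt_iff hJbdb ⟨r0, hr0⟩).1 hz.1
        obtain ⟨r2, hr2J, hzr2⟩ := (lt_csSup_iff hJbda ⟨r0, hr0⟩).1 hz.2
        exact hJord.out hr1J hr2J ⟨hr1z.le, hzr2.le⟩
      have hcover : μ J ≤ μ (Ioo p q) := by
        calc μ J ≤ μ (Ioo p q ∪ {p} ∪ {q}) := by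
              apply measure_mono
              intro r hr
              rcases eq_or_lt_of_le (hJpq hr).1 with h | h
              · left; right; exact h.symm
              rcases eq_or_lt_of_le (hJpq hr).2 with h' | h'
              · right; exact h'
              · left; left; exact ⟨h, h'⟩
          _ ≤ μ (Ioo p q ∪ {p}) + μ {q} := measure_union_le _ _
          _ ≤ μ (Ioo p q) + μ {p} + μ {q} := add_le_add_left (measure_union_le _ _) _
          _ = μ (Ioo p q) := by rw [hatom, hatom, add_zero, add_zero]
      have hd : 0 < q - p := by linarith
      set pn : ℕ → ℝ := fun n => p + (q-p) / (n+2) with hpn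
      set qn : ℕ → ℝ := fun n => q - (q-p) / (n+2) with hqn
      have hnpos : ∀ n : ℕ, (0:ℝ) < (n:ℝ) + 2 := fun n => by positivity
      have hfrac_pos : ∀ n : ℕ, 0 < (q-p) / ((n:ℝ)+2) := fun n => div_pos hd (hnpos n)
      have hfrac_le : ∀ n : ℕ, (q-p)/((n:ℝ)+2) ≤ (q-p)/2 := fun n => by
        apply div_le_div_of_nonneg_left hd.le (by norm_num)
        have : (0:ℝ) ≤ (n:ℝ) := Nat.cast_nonneg n
        linarith
      have hpnIoo : ∀ n, pn n ∈ Ioo p q := by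
        intro n
        constructor
        · simp only [hpn]; linarith [hfrac_pos n]
        · simp only [hpn]; linarith [hfrac_pos n, hfrac_le n]
      have hqnIoo : ∀ n, qn n ∈ Ioo p q := by
        intro n
        constructor
        · simp only [hqn]; linarith [hfrac_pos n, hfrac_le n]
        · simp only [hqn]; linarith [hfrac_pos n]
      have hpnqn : ∀ n, pn n ≤ qn n := by
        intro n
        simp only [hpn, hqn]
        linarith [hfrac_le n, hd]
      have hmono : Monotone (fun n : ℕ => Icc (pn n) (qn n)) := by
        intro n m hnm
        have hle : (q-p)/((m:ℝ)+2) ≤ (q-p)/((n:ℝ)+2) := by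
          apply div_le_div_of_nonneg_left hd.le (hnpos n)
          have := (Nat.cast_le (α := ℝ)).2 hnm
          linarith
        apply Icc_subset_Icc
        · simp only [hpn]; linarith
        · simp only [hqn]; linarith
      have hunion : Ioo p q = ⋃ n, Icc (pn n) (qn n) := by
        apply Subset.antisymm
        · intro z hz
          have hε : 0 < min (z - p) (q - z) := lt_min (by linarith [hz.1]) (by linarith [hz.2])
          obtain ⟨n, hn⟩ := exists_nat_gt ((q-p) / min (z - p) (q - z))
          refine mem_iUnion.2 ⟨n, ?_, ?_⟩
          · have h2 : (q-p)/((n:ℝ)+2) < min (z-p) (q-z) := by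
              rw [div_lt_iff₀ (hnpos n)]
              calc q - p = ((q-p)/min (z-p) (q-z)) * min (z-p) (q-z) := by
                    rw [div_mul_cancel₀ _ hε.ne']
                _ < ((n:ℝ)+2) * min (z-p) (q-z) := by
                    apply mul_lt_mul_of_pos_right _ hε
                    linarith
                _ = min (z-p) (q-z) * ((n:ℝ)+2) := mul_comm _ _
            simp only [hpn]
            have := min_le_left (z-p) (q-z)
            linarith
          · have h2 : (q-p)/((n:ℝ)+2) < min (z-p) (q-z) := by
              rw [div_lt_iff₀ (hnpos n)]
              calc q - p = ((q-p)/min (z-p) (q-z)) * min (z-p) (q-z) := by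
                    rw [div_mul_cancel₀ _ hε.ne']
                _ < ((n:ℝ)+2) * min (z-p) (q-z) := by
                    apply mul_lt_mul_of_pos_right _ hε
                    linarith
                _ = min (z-p) (q-z) * ((n:ℝ)+2) := mul_comm _ _
            simp only [hqn]
            have := min_le_right (z-p) (q-z)
            linarith
        · refine iUnion_subset fun n => ?_
          intro z hz
          exact ⟨lt_of_lt_of_le (hpnIoo n).1 hz.1, lt_of_le_of_lt hz.2 (hqnIoo n).2⟩
      calc μ J ≤ μ (Ioo p q) := hcover
        _ = ⨆ n, μ (Icc (pn n) (qn n)) := by rw [hunion]; exact hmono.measure_iUnion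
        _ ≤ ENNReal.ofReal b * lam (Icc a c) :=
            iSup_le fun n => pair (pn n) (qn n) (hIooJ (hpnIoo n)) (hIooJ (hqnIoo n)) (hpnqn n)
  -- Step 2: absolute continuity of the pushforward
  have hEne : ∀ y : ℝ, {r : ℝ | y ≤ Tt r}.Nonempty := by
    intro y
    refine ⟨max 0 ((y - t * T 0)/(1-t)), ?_⟩
    have h0 : (0:ℝ) ≤ max 0 ((y - t * T 0)/(1-t)) := le_max_left _ _
    have hT0 : T 0 ≤ T (max 0 ((y - t * T 0)/(1-t))) := hT h0
    have h1 : (y - t*T 0)/(1-t) ≤ max 0 ((y - t * T 0)/(1-t)) := le_max_right _ _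
    have h2 : y - t*T 0 ≤ (1-t) * max 0 ((y - t * T 0)/(1-t)) := by
      rw [← div_le_iff₀' hc1]
      exact h1
    have h3 : t * T 0 ≤ t * T (max 0 ((y - t * T 0)/(1-t))) :=
      mul_le_mul_of_nonneg_left hT0 ht0
    show y ≤ (1-t) * _ + t * T _
    linarith
  have hEbdd : ∀ y : ℝ, BddBelow {r : ℝ | y ≤ Tt r} := by
    intro y
    refine ⟨min 0 ((y - t*T 0 - 1)/(1-t)), fun r hr => ?_⟩
    by_contra hcon
    push_neg at hcon
    have hr0 : r ≤ 0 := le_of_lt (lt_of_lt_of_le hcon (min_le_left _ _))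
    have hTr : T r ≤ T 0 := hT hr0
    have h1 : r < (y - t*T 0 - 1)/(1-t) := lt_of_lt_of_le hcon (min_le_right _ _)
    have h2 : r * (1-t) < y - t*T 0 - 1 := (lt_div_iff₀ hc1).1 h1
    have h3 : t*T r ≤ t*T 0 := mul_le_mul_of_nonneg_left hTr ht0
    have hy : y ≤ (1-t)*r + t*T r := hr
    nlinarith
  set g : ℝ → ℝ := fun y => sInf {r : ℝ | y ≤ Tt r} with hgdef
  have hgle : ∀ y y' : ℝ, y ≤ y' → g y ≤ g y' ∧ g y' ≤ g y + (y' - y)/(1-t) := by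
    intro y y' hyy'
    constructor
    · exact csInf_le_csInf (hEbdd y) (hEne y') (fun r hr => le_trans hyy' hr)
    · have hub : ∀ r, r ∈ {r : ℝ | y ≤ Tt r} → g y' ≤ r + (y'-y)/(1-t) := by
        intro r hr
        apply csInf_le (hEbdd y')
        show y' ≤ (1-t) * (r + (y'-y)/(1-t)) + t * T (r + (y'-y)/(1-t))
        have hδ : 0 ≤ (y'-y)/(1-t) := div_nonneg (by linarith) hc1.le
        have hTr : T r ≤ T (r + (y'-y)/(1-t)) := hT (by linarith)
        have h3 : t * T r ≤ t * T (r + (y'-y)/(1-t)) := mul_le_mul_of_nonneg_left hTr ht0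
        have h4 : (y'-y)/(1-t) * (1-t) = y' - y := div_mul_cancel₀ _ hc1.ne'
        have hyr : y ≤ (1-t)*r + t*T r := hr
        nlinarith
      have hlb : g y' - (y'-y)/(1-t) ≤ g y :=
        le_csInf (hEne y) (fun r hr => by linarith [hub r hr])
      linarith
  have hglip : LipschitzWith (Real.toNNReal ((1-t)⁻¹)) g := by
    apply LipschitzWith.of_dist_le_mul
    have haux : ∀ y y' : ℝ, y ≤ y' → dist (g y) (g y') ≤ (1-t)⁻¹ * dist y y' := by
      intro y y' h
      obtain ⟨h1, h2⟩ := hgle y y' h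
      rw [Real.dist_eq, Real.dist_eq, abs_of_nonpos (by linarith), abs_of_nonpos (by linarith)]
      have : (y' - y)/(1-t) = (1-t)⁻¹ * (y' - y) := by rw [div_eq_inv_mul]
      linarith [this ▸ h2]
    intro y y'
    have hco : (Real.toNNReal ((1-t)⁻¹) : ℝ) = (1-t)⁻¹ :=
      Real.coe_toNNReal _ (by positivity)
    rcases le_total y y' with h | h
    · rw [hco]; exact haux y y' h
    · rw [hco, dist_comm (g y) (g y'), dist_comm y y']
      exact haux y' y h
  have hginv : ∀ r : ℝ, g (Tt r) = r := by
    intro r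
    apply IsLeast.csInf_eq
    constructor
    · exact le_refl (Tt r)
    · intro r' hr'
      by_contra hcon
      push_neg at hcon
      exact absurd hr' (not_le.2 (hTtstrict hcon))
  have hσvol : μ.map Tt ≪ (volume : Measure ℝ) := by
    apply Measure.AbsolutelyContinuous.mk
    intro s hs hsvol
    rw [Measure.map_apply hTtmeas hs]
    apply hμnull
    have himg : Tt ⁻¹' s ⊆ g '' s := fun r hr => ⟨Tt r, hr, hginv r⟩
    apply measure_mono_null himg
    have h1 : (volume : Measure ℝ) (g '' s) = μH[1] (g '' s) := by
      rw [MeasureTheory.hausdorffMeasure_real]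
    rw [h1]
    refine le_antisymm ?_ (zero_le)
    calc μH[1] (g '' s) ≤ (Real.toNNReal ((1-t)⁻¹) : ℝ≥0∞) ^ (1:ℝ) * μH[1] s :=
          hglip.hausdorffMeasure_image_le zero_le_one s
      _ = (Real.toNNReal ((1-t)⁻¹) : ℝ≥0∞) * volume s := by
          rw [ENNReal.rpow_one, MeasureTheory.hausdorffMeasure_real]
      _ = 0 := by rw [hsvol, mul_zero]
  -- Step 3: finish via density comparison
  haveI hfin1 : IsFiniteMeasure (μ.map Tt) := by
    constructor
    rw [Measure.map_apply hTtmeas MeasurableSet.univ]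
    exact measure_lt_top μ _
  haveI hfin2 : IsFiniteMeasure (ENNReal.ofReal b • lam) := by
    constructor
    rw [Measure.smul_apply, smul_eq_mul]
    exact ENNReal.mul_lt_top ENNReal.ofReal_lt_top (measure_lt_top lam _)
  have hcomp : ∀ x r : ℝ,
      (μ.map Tt) (Metric.closedBall x r) ≤ (ENNReal.ofReal b • lam) (Metric.closedBall x r) := by
    intro x r
    rw [Real.closedBall_eq_Icc, Measure.map_apply hTtmeas measurableSet_Icc,
      Measure.smul_apply, smul_eq_mul]
    exact step1 _ _
  have hae : (μ.map Tt).rnDeriv volume ≤ᵐ[volume] (ENNReal.ofReal b • lam).rnDeriv volume := by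
    filter_upwards [Besicovitch.ae_tendsto_rnDeriv (μ.map Tt) volume,
      Besicovitch.ae_tendsto_rnDeriv (ENNReal.ofReal b • lam) volume] with x h1 h2
    exact le_of_tendsto_of_tendsto' h1 h2
      (fun r => ENNReal.div_le_div_right (hcomp x r) _)
  calc μ.map Tt
      = volume.withDensity ((μ.map Tt).rnDeriv volume) :=
        (Measure.withDensity_rnDeriv_eq _ _ hσvol).symm
    _ ≤ volume.withDensity ((ENNReal.ofReal b • lam).rnDeriv volume) := withDensity_mono hae
    _ ≤ ENNReal.ofReal b • lam := Measure.withDensity_rnDeriv_le _ _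

end MainDisp

end
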